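/- arXiv:0811.2012 — 3 statements merged into one kernel-verified Lean document; each statement's English description precedes it below -/
import Mathlib

section
/- Let G be a graph, Z ⊆ V(G), and k a positive integer. Suppose every (k−1)-separation of G is Z-bad. Let {A,B} and {C,D} be k-separations of G with separators S = A∩B, T = C∩D and fragments A' = A−B, B' = B−A, C' = C−D, D' = D−C. If A' ∩ C' is not contained in Z and B' is not contained in Z, then |T ∩ A'| ≥ |S ∩ D'| and |S ∩ C'| ≥ |T ∩ B'|. -/
open SimpleGraph

/-- `{A, B}` is a separation of the graph `G` restricted to vertex set `W`:
`A ∪ B = W`, there is no edge between `A − B` and `B − A`, and both fragments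
`A − B` and `B − A` are nonempty. -/
def IsSepOn {V : Type*} (G : SimpleGraph V) (W A B : Set V) : Prop :=
  A ∪ B = W ∧ (∀ a ∈ A \ B, ∀ b ∈ B \ A, ¬ G.Adj a b) ∧
    (A \ B).Nonempty ∧ (B \ A).Nonempty

/-- `{A, B}` is a separation of `G`. -/
def IsSeparation {V : Type*} (G : SimpleGraph V) (A B : Set V) : Prop :=
  IsSepOn G Set.univ A B

/-- `{A, B}` is `Z`-good: `{A − Z, B − Z}` is a separation of `G − Z`. -/
def ZGood {V : Type*} (G : SimpleGraph V) (Z A B : Set V) : Prop :=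
  IsSepOn G Zᶜ (A \ Z) (B \ Z)

/-- `G` is `k`-connected: more than `k` vertices, and deleting fewer than `k`
vertices leaves a connected graph. -/
def KConnected {V : Type*} (k : ℕ) (G : SimpleGraph V) : Prop :=
  k < (Set.univ : Set V).ncard ∧
    ∀ X : Set V, X.ncard < k → (G.induce Xᶜ).Connected

/-- The graph `G / vw` obtained from `G` by contracting the edge `vw`:
the vertex `w` is removed and identified with `v`. -/
def contract {V : Type*} (G : SimpleGraph V) (v w : V) :
    SimpleGraph {x : V // x ≠ w} where
  Adj x y := x ≠ y ∧
    (G.Adj x y ∨ ((x : V) = v ∧ G.Adj w y) ∨ ((y : V) = v ∧ G.Adj w x))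
  symm := by
    constructor
    rintro x y ⟨hxy, h⟩
    refine ⟨hxy.symm, ?_⟩
    rcases h with h | ⟨h1, h2⟩ | ⟨h1, h2⟩
    · exact Or.inl h.symm
    · exact Or.inr (Or.inr ⟨h1, h2⟩)
    · exact Or.inr (Or.inl ⟨h1, h2⟩)
  loopless := by constructor; rintro x ⟨h, -⟩; exact h rfl

/-- The graph obtained from `G` by contracting the set `F` of edges:
its vertices are the connected components of the spanning subgraph with
edge set `F`, with components adjacent if `G` has an edge between them. -/
def contractEdges {V : Type*} (G : SimpleGraph V) (F : Set (Sym2 V)) :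
    SimpleGraph (SimpleGraph.fromEdgeSet F).ConnectedComponent where
  Adj c d := c ≠ d ∧ ∃ x y, G.Adj x y ∧
    (SimpleGraph.fromEdgeSet F).connectedComponentMk x = c ∧
    (SimpleGraph.fromEdgeSet F).connectedComponentMk y = d
  symm := by
    constructor
    rintro c d ⟨hcd, x, y, hxy, hx, hy⟩
    exact ⟨hcd.symm, y, x, hxy.symm, hy, hx⟩
  loopless := by constructor; rintro c ⟨h, -⟩; exact h rfl

/-- `G` has a `K_t`-minor: there are `t` pairwise disjoint nonempty connected
vertex sets (branch sets) with an edge between each pair. -/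
def HasCliqueMinor {V : Type*} (G : SimpleGraph V) (t : ℕ) : Prop :=
  ∃ f : Fin t → Set V,
    (∀ i, (G.induce (f i)).Connected) ∧
    (∀ i j, i ≠ j → Disjoint (f i) (f j)) ∧
    (∀ i j, i ≠ j → ∃ a ∈ f i, ∃ b ∈ f j, G.Adj a b)
/-- If every `(k−1)`-separation of `G` is `Z`-bad, and `{A,B}`, `{C,D}` are
`k`-separations with `A' ∩ C' ⊄ Z` and `B' ⊄ Z`, then `|T ∩ A'| ≥ |S ∩ D'|`
and `|S ∩ C'| ≥ |T ∩ B'|`. -/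
theorem stmt5 {V : Type*} [Fintype V] (G : SimpleGraph V) (k : ℕ) (hk : 0 < k)
    (Z : Set V)
    (hbad : ∀ A B : Set V, IsSeparation G A B → (A ∩ B).ncard ≤ k - 1 →
      (A \ B ⊆ Z ∨ B \ A ⊆ Z))
    (A B C D : Set V)
    (hAB : IsSeparation G A B) (hABk : (A ∩ B).ncard ≤ k)
    (hCD : IsSeparation G C D) (hCDk : (C ∩ D).ncard ≤ k)
    (h1 : ¬ (A \ B) ∩ (C \ D) ⊆ Z) (h2 : ¬ (B \ A) ⊆ Z) :
    ((A ∩ B) ∩ (D \ C)).ncard ≤ ((C ∩ D) ∩ (A \ B)).ncard ∧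
      ((C ∩ D) ∩ (B \ A)).ncard ≤ ((A ∩ B) ∩ (C \ D)).ncard :=  by
  classical
  obtain ⟨hABu, hABe, hABne1, hABne2⟩ := hAB
  obtain ⟨hCDu, hCDe, hCDne1, hCDne2⟩ := hCD
  have hABm : ∀ x : V, x ∈ A ∨ x ∈ B := by
    intro x
    have : x ∈ A ∪ B := by rw [hABu]; exact Set.mem_univ x
    rwa [Set.mem_union] at this
  have hCDm : ∀ x : V, x ∈ C ∨ x ∈ D := by
    intro x
    have : x ∈ C ∪ D := by rw [hCDu]; exact Set.mem_univ x
    rwa [Set.mem_union] at this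
  -- the corner separation {A ∩ C, B ∪ D}
  have hfrag : (A ∩ C) \ (B ∪ D) = (A \ B) ∩ (C \ D) := by
    ext x; simp only [Set.mem_diff, Set.mem_inter_iff, Set.mem_union]; tauto
  have hsep : IsSeparation G (A ∩ C) (B ∪ D) := by
    refine ⟨?_, ?_, ?_, ?_⟩
    · ext x
      simp only [Set.mem_union, Set.mem_inter_iff, Set.mem_univ, iff_true]
      rcases hABm x with hx | hx
      · rcases hCDm x with hy | hy
        · exact Or.inl ⟨hx, hy⟩
        · exact Or.inr (Or.inr hy)
      · exact Or.inr (Or.inl hx)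
    · intro a ha b hb
      rw [hfrag] at ha
      obtain ⟨⟨haA, haB⟩, haC, haD⟩ := ha
      obtain ⟨hbBD, hbAC⟩ := hb
      rcases hABm b with hbA | hbB
      · have hbC : b ∉ C := fun h => hbAC ⟨hbA, h⟩
        have hbD : b ∈ D := (hCDm b).resolve_left hbC
        exact hCDe a ⟨haC, haD⟩ b ⟨hbD, hbC⟩
      · by_cases hbA : b ∈ A
        · have hbC : b ∉ C := fun h => hbAC ⟨hbA, h⟩
          have hbD : b ∈ D := (hCDm b).resolve_left hbC
          exact hCDe a ⟨haC, haD⟩ b ⟨hbD, hbC⟩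
        · exact hABe a ⟨haA, haB⟩ b ⟨hbB, hbA⟩
    · rw [hfrag]
      obtain ⟨x, hx, -⟩ := Set.nonempty_of_not_subset h1
      exact ⟨x, hx⟩
    · obtain ⟨x, hx, -⟩ := Set.nonempty_of_not_subset h2
      exact ⟨x, Or.inl hx.1, fun h => hx.2 h.1⟩
  -- the corner separator has size ≥ k
  have hBsub : B \ A ⊆ (B ∪ D) \ (A ∩ C) := by
    intro x hx
    exact ⟨Or.inl hx.1, fun h => hx.2 h.1⟩
  have hXk : k ≤ ((A ∩ C) ∩ (B ∪ D)).ncard := by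
    by_contra h
    rcases hbad _ _ hsep (by omega) with h' | h'
    · rw [hfrag] at h'; exact h1 h'
    · exact h2 (fun x hx => h' (hBsub hx))
  -- counting
  have fin : ∀ s : Set V, s.Finite := fun s => s.toFinite
  have hX : ((A ∩ C) ∩ (B ∪ D)).ncard
      = ((A ∩ B) ∩ C).ncard + ((C ∩ D) ∩ (A \ B)).ncard := by
    rw [← Set.ncard_union_eq (by
        rw [Set.disjoint_left]
        rintro x ⟨⟨-, hxB⟩, -⟩ ⟨-, -, hxB'⟩
        exact hxB' hxB) (fin _) (fin _)]
    congr 1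
    ext x
    simp only [Set.mem_inter_iff, Set.mem_union, Set.mem_diff]
    constructor
    · rintro ⟨⟨hA, hC⟩, hBD⟩
      by_cases hB : x ∈ B
      · exact Or.inl ⟨⟨hA, hB⟩, hC⟩
      · exact Or.inr ⟨⟨hC, hBD.resolve_left hB⟩, hA, hB⟩
    · rintro (⟨⟨hA, hB⟩, hC⟩ | ⟨⟨hC, hD⟩, hA, -⟩)
      · exact ⟨⟨hA, hC⟩, Or.inl hB⟩
      · exact ⟨⟨hA, hC⟩, Or.inr hD⟩
  have hSC : ((A ∩ B) ∩ C).ncard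
      = ((A ∩ B) ∩ (C \ D)).ncard + ((A ∩ B) ∩ (C ∩ D)).ncard := by
    rw [← Set.ncard_union_eq (by
        rw [Set.disjoint_left]
        rintro x ⟨-, -, hxD⟩ ⟨-, -, hxD'⟩
        exact hxD hxD') (fin _) (fin _)]
    congr 1
    ext x
    simp only [Set.mem_inter_iff, Set.mem_union, Set.mem_diff]
    constructor
    · rintro ⟨hAB, hC⟩
      by_cases hD : x ∈ D
      · exact Or.inr ⟨hAB, hC, hD⟩
      · exact Or.inl ⟨hAB, hC, hD⟩
    · rintro (⟨hAB, hC, -⟩ | ⟨hAB, hC, -⟩) <;> exact ⟨hAB, hC⟩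
  have hS : (A ∩ B).ncard
      = ((A ∩ B) ∩ C).ncard + ((A ∩ B) ∩ (D \ C)).ncard := by
    rw [← Set.ncard_union_eq (by
        rw [Set.disjoint_left]
        rintro x ⟨-, hxC⟩ ⟨-, -, hxC'⟩
        exact hxC' hxC) (fin _) (fin _)]
    congr 1
    ext x
    simp only [Set.mem_inter_iff, Set.mem_union, Set.mem_diff]
    constructor
    · rintro hAB
      by_cases hC : x ∈ C
      · exact Or.inl ⟨hAB, hC⟩
      · exact Or.inr ⟨hAB, (hCDm x).resolve_left hC, hC⟩
    · rintro (⟨hAB, -⟩ | ⟨hAB, -⟩) <;> exact hAB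
  have hT : (C ∩ D).ncard
      = ((C ∩ D) ∩ (A \ B)).ncard + ((C ∩ D) ∩ (A ∩ B)).ncard
        + ((C ∩ D) ∩ (B \ A)).ncard := by
    have d1 : Disjoint ((C ∩ D) ∩ (A \ B)) ((C ∩ D) ∩ (A ∩ B)) := by
      rw [Set.disjoint_left]
      rintro x ⟨-, -, hxB⟩ ⟨-, -, hxB'⟩
      exact hxB hxB'
    have d2 : Disjoint (((C ∩ D) ∩ (A \ B)) ∪ ((C ∩ D) ∩ (A ∩ B)))
        ((C ∩ D) ∩ (B \ A)) := by
      rw [Set.disjoint_left]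
      rintro x (⟨-, hxA, -⟩ | ⟨-, hxA, -⟩) ⟨-, -, hxA'⟩ <;> exact hxA' hxA
    rw [← Set.ncard_union_eq d1 (fin _) (fin _),
      ← Set.ncard_union_eq d2 (fin _) (fin _)]
    congr 1
    ext x
    simp only [Set.mem_inter_iff, Set.mem_union, Set.mem_diff]
    constructor
    · rintro hCDx
      rcases hABm x with hA | hB
      · by_cases hB : x ∈ B
        · exact Or.inl (Or.inr ⟨hCDx, hA, hB⟩)
        · exact Or.inl (Or.inl ⟨hCDx, hA, hB⟩)
      · by_cases hA : x ∈ A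
        · exact Or.inl (Or.inr ⟨hCDx, hA, hB⟩)
        · exact Or.inr ⟨hCDx, hB, hA⟩
    · rintro ((⟨h, -⟩ | ⟨h, -⟩) | ⟨h, -⟩) <;> exact h
  have hq : ((A ∩ B) ∩ (C ∩ D)).ncard = ((C ∩ D) ∩ (A ∩ B)).ncard := by
    rw [Set.inter_comm]
  refine ⟨by omega, by omega⟩
end

section
/- Assume that for each positive integer t there exists N_t such that every (t+1)-connected graph with at least N_t vertices has a K_t-minor. Then for each positive integer t there exists M_t such that every graph G with no K_t-minor admits a partition of its vertex set into at most ⌈(7t−3)/2⌉ parts such that every connected component of the subgraph induced by each part has at most M_t vertices. -/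
open SimpleGraph

namespace Stmt11Aux

open SimpleGraph Set

variable {V : Type} {W : Type*}

section DistMachinery

variable {H : SimpleGraph W}

lemma dist_adj_le {r u v : W} (hconn : H.Connected) (h : H.Adj u v) :
    H.dist r v ≤ H.dist r u + 1 := by
  have h1 : H.dist u v ≤ 1 := by
    have := SimpleGraph.dist_le (SimpleGraph.Walk.cons h SimpleGraph.Walk.nil)
    simpa using this
  have := hconn.dist_triangle (u := r) (v := u) (w := v)
  omega

lemma exists_step (hconn : H.Connected) (r : W) :
    ∃ step1 : W → W, ∀ v, 0 < H.dist r v →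
      H.Adj (step1 v) v ∧ H.dist r (step1 v) + 1 = H.dist r v := by
  classical
  have key : ∀ v : W, ∃ u : W, 0 < H.dist r v →
      H.Adj u v ∧ H.dist r u + 1 = H.dist r v := by
    intro v
    by_cases hv : 0 < H.dist r v
    · obtain ⟨w, hw⟩ := hconn.exists_walk_length_eq_dist r v
      have hlen : 0 < w.length := by rw [hw]; exact hv
      cases hq : w.reverse with
      | nil =>
        exfalso
        have h0 := congrArg SimpleGraph.Walk.length hq
        rw [SimpleGraph.Walk.length_reverse, SimpleGraph.Walk.length_nil] at h0
        omega
      | @cons _ u _ hadj q =>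
        refine ⟨u, fun _ => ⟨hadj.symm, ?_⟩⟩
        have h1 : H.dist r u ≤ q.reverse.length := SimpleGraph.dist_le _
        have h2 : q.length + 1 = w.length := by
          have := congrArg SimpleGraph.Walk.length hq
          simp at this; omega
        have h3 : H.dist r v ≤ H.dist r u + 1 := dist_adj_le hconn hadj.symm
        simp only [SimpleGraph.Walk.length_reverse] at h1
        omega
    · exact ⟨v, fun h => absurd h hv⟩
  choose step1 hstep1 using key
  exact ⟨step1, hstep1⟩

lemma step_iter_dist (r : W) (step1 : W → W)
    (hstep : ∀ v, 0 < H.dist r v →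
      H.Adj (step1 v) v ∧ H.dist r (step1 v) + 1 = H.dist r v) :
    ∀ (b : W) (i : ℕ), i ≤ H.dist r b → H.dist r (step1^[i] b) = H.dist r b - i := by
  intro b i
  induction i with
  | zero => intro _; simp
  | succ i ih =>
    intro hi
    have h1 := ih (by omega)
    have h2 : 0 < H.dist r (step1^[i] b) := by omega
    rw [Function.iterate_succ_apply']
    have := (hstep _ h2).2
    omega

lemma step_iter_adj (r : W) (step1 : W → W)
    (hstep : ∀ v, 0 < H.dist r v →
      H.Adj (step1 v) v ∧ H.dist r (step1 v) + 1 = H.dist r v) :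
    ∀ (b : W) (i : ℕ), i + 1 ≤ H.dist r b →
      H.Adj (step1^[i+1] b) (step1^[i] b) := by
  intro b i hi
  have h1 := step_iter_dist r step1 hstep b i (by omega)
  have h2 : 0 < H.dist r (step1^[i] b) := by omega
  rw [Function.iterate_succ_apply']
  exact (hstep _ h2).1

lemma step_iter_top (hconn : H.Connected) (r : W) (step1 : W → W)
    (hstep : ∀ v, 0 < H.dist r v →
      H.Adj (step1 v) v ∧ H.dist r (step1 v) + 1 = H.dist r v)
    (b : W) : step1^[H.dist r b] b = r := by
  have h1 := step_iter_dist r step1 hstep b (H.dist r b) le_rfl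
  simp only [Nat.sub_self] at h1
  exact ((hconn.dist_eq_zero_iff).mp h1).symm

end DistMachinery

section Basics

variable (G : SimpleGraph V)

def Reach (S : Set V) : V → V → Prop :=
  Relation.ReflTransGen (fun a b => a ∈ S ∧ b ∈ S ∧ G.Adj a b)

def Conn (S : Set V) : Prop := ∀ x ∈ S, ∀ y ∈ S, Reach G S x y

def AdjS (A B : Set V) : Prop := ∃ a ∈ A, ∃ b ∈ B, G.Adj a b

variable {G}

lemma AdjS.symm' {A B : Set V} (h : AdjS G A B) : AdjS G B A := by
  obtain ⟨a, ha, b, hb, hab⟩ := h; exact ⟨b, hb, a, ha, hab.symm⟩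

lemma reach_symm {S : Set V} {x y : V} (h : Reach G S x y) : Reach G S y x :=
  (@Relation.ReflTransGen.symmetric _ _ ⟨fun a b ⟨ha, hb, hab⟩ => ⟨hb, ha, hab.symm⟩⟩).symm _ _ h

lemma reach_mono {S T : Set V} (hST : S ⊆ T) {x y : V} (h : Reach G S x y) :
    Reach G T x y :=
  Relation.ReflTransGen.mono (p := fun a b => a ∈ T ∧ b ∈ T ∧ G.Adj a b)
    (fun a b ⟨ha, hb, hab⟩ => ⟨hST ha, hST hb, hab⟩) x y h

lemma reach_mem_right {S : Set V} {x y : V} (h : Reach G S x y) (hx : x ∈ S) : y ∈ S := by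
  induction h with
  | refl => exact hx
  | tail _ step _ => exact step.2.1

lemma reach_upgrade {S : Set V} {x y : V} (h : Reach G S x y) :
    Reach G {z | z ∈ S ∧ Reach G S x z} x y := by
  induction h with
  | refl => exact .refl
  | @tail b c hxb step ih =>
      exact ih.tail ⟨⟨step.1, hxb⟩, ⟨step.2.1, hxb.tail step⟩, step.2.2⟩

lemma induce_reachable_of_reach {S : Set V} {a b : V} (h : Reach G S a b) :
    ∀ (ha : a ∈ S) (hb : b ∈ S), (G.induce S).Reachable ⟨a, ha⟩ ⟨b, hb⟩ := by
  induction h with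
  | refl => intro ha hb; exact Reachable.refl _
  | tail hab step ih =>
    intro ha hc
    obtain ⟨hb, hc', hadj⟩ := step
    exact (ih ha hb).trans (SimpleGraph.Adj.reachable (by exact hadj))

lemma conn_induce_connected {S : Set V} (hne : S.Nonempty) (hc : Conn G S) :
    (G.induce S).Connected := by
  obtain ⟨x, hx⟩ := hne
  haveI : Nonempty ↑S := ⟨⟨x, hx⟩⟩
  refine ⟨fun a b => ?_⟩
  have h := hc a.1 a.2 b.1 b.2
  have := induce_reachable_of_reach h a.2 b.2
  simpa using this

lemma reach_of_induce_walk {S : Set V} : ∀ {a b : ↑S} (_ : (G.induce S).Walk a b),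
    Reach G S ↑a ↑b := by
  intro a b w
  induction w with
  | nil => exact Relation.ReflTransGen.refl
  | @cons u v w h p ih =>
    exact Relation.ReflTransGen.head ⟨u.2, v.2, by exact h⟩ ih

end Basics

end Stmt11Aux

namespace Stmt11Aux

open SimpleGraph Set

variable {V : Type}

lemma clique_minor_of_parts {G : SimpleGraph V} {t : ℕ} (ht : 1 ≤ t) {Q : Set (Set V)}
    (hQfin : Q.Finite) (hQcard : Q.ncard = t - 1) {C : Set V}
    (hCconn : Conn G C) (hCne : C.Nonempty)
    (hconn : ∀ p ∈ Q, Conn G p) (hne : ∀ p ∈ Q, p.Nonempty)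
    (hdisj : ∀ p ∈ Q, ∀ q ∈ Q, p ≠ q → Disjoint p q)
    (hdisjC : ∀ p ∈ Q, Disjoint p C)
    (hadj : ∀ p ∈ Q, ∀ q ∈ Q, p ≠ q → AdjS G p q)
    (hadjC : ∀ p ∈ Q, AdjS G p C) : HasCliqueMinor G t := by
  classical
  have hFq : hQfin.toFinset.card = t - 1 := by
    rw [Set.ncard_eq_toFinset_card _ hQfin] at hQcard; exact hQcard
  let e : ↥hQfin.toFinset ≃ Fin (t-1) := hQfin.toFinset.equivFin.trans (finCongr hFq)
  have hmem : ∀ (a : ↥hQfin.toFinset), (a : Set V) ∈ Q := by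
    intro a; have := a.2; rwa [Set.Finite.mem_toFinset] at this
  let B : Fin t → Set V := fun i => if h : (i : ℕ) < t - 1 then (e.symm ⟨i, h⟩ : Set V) else C
  have hBQ : ∀ (i : Fin t) (h : (i : ℕ) < t - 1), B i ∈ Q := by
    intro i h; simp only [B, dif_pos h]; exact hmem _
  have hBC : ∀ (i : Fin t), ¬ (i : ℕ) < t - 1 → B i = C := by
    intro i h; simp only [B, dif_neg h]
  have hBeq : ∀ (i : Fin t) (h : (i : ℕ) < t - 1), B i = (e.symm ⟨i, h⟩ : Set V) := by
    intro i h; simp only [B, dif_pos h]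
  have hBne : ∀ (i j : Fin t) (hi : (i : ℕ) < t - 1) (hj : (j : ℕ) < t - 1),
      i ≠ j → B i ≠ B j := by
    intro i j hi hj hij
    rw [hBeq i hi, hBeq j hj]
    intro hval
    apply hij
    have h1 : e.symm ⟨i, hi⟩ = e.symm ⟨j, hj⟩ := Subtype.ext hval
    have h2 := e.symm.injective.eq_iff.mp h1
    have h3 := congrArg Fin.val h2
    exact Fin.ext h3
  refine ⟨B, ?_, ?_, ?_⟩
  · intro i
    by_cases h : (i : ℕ) < t - 1
    · have hQ := hBQ i h
      exact conn_induce_connected (hne _ hQ) (hconn _ hQ)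
    · rw [hBC i h]; exact conn_induce_connected hCne hCconn
  · intro i j hij
    by_cases hi : (i : ℕ) < t - 1 <;> by_cases hj : (j : ℕ) < t - 1
    · exact hdisj _ (hBQ i hi) _ (hBQ j hj) (hBne i j hi hj hij)
    · rw [hBC j hj]; exact hdisjC _ (hBQ i hi)
    · rw [hBC i hi]; exact (hdisjC _ (hBQ j hj)).symm
    · exfalso; apply hij; apply Fin.ext
      have := i.isLt; have := j.isLt; omega
  · intro i j hij
    by_cases hi : (i : ℕ) < t - 1 <;> by_cases hj : (j : ℕ) < t - 1
    · exact hadj _ (hBQ i hi) _ (hBQ j hj) (hBne i j hi hj hij)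
    · rw [hBC j hj]; exact hadjC _ (hBQ i hi)
    · rw [hBC i hi]; exact (hadjC _ (hBQ j hj)).symm'
    · exfalso; apply hij; apply Fin.ext
      have := i.isLt; have := j.isLt; omega

structure Config (G : SimpleGraph V) (t : ℕ) (S : Set V) where
  f : V → Fin (t-1) × Fin 2
  P : Set (Set V)
  hfin : P.Finite
  cover : ⋃₀ P = Sᶜ
  nonemp : ∀ p ∈ P, p.Nonempty
  disj : ∀ p ∈ P, ∀ q ∈ P, p ≠ q → Disjoint p q
  conn : ∀ p ∈ P, Conn G p
  const : ∀ p ∈ P, ∀ x ∈ p, ∀ y ∈ p, (f x).1 = (f y).1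
  proper : ∀ p ∈ P, ∀ q ∈ P, p ≠ q → AdjS G p q → ∀ x ∈ p, ∀ y ∈ q, (f x).1 ≠ (f y).1
  small : ∀ p ∈ P, ∀ T ⊆ p, Conn G T → (∀ x ∈ T, ∀ y ∈ T, f x = f y) → T.ncard ≤ t
  att : ∀ C ⊆ S, Conn G C → C.Nonempty →
    (∀ p ∈ P, AdjS G p C → ∀ q ∈ P, AdjS G q C → p ≠ q → AdjS G p q) ∧
      {p ∈ P | AdjS G p C}.ncard ≤ t - 2

end Stmt11Aux

namespace Stmt11Aux

open SimpleGraph Set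

variable {V : Type} [Fintype V]

lemma descend {G : SimpleGraph V} {t : ℕ} (ht : 2 ≤ t) (hG : ¬ HasCliqueMinor G t)
    {S : Set V} (cfg : Config G t S) (hS : S.Nonempty) :
    ∃ S' : Set V, S' ⊂ S ∧ Nonempty (Config G t S') := by
  classical
  obtain ⟨x, hxS⟩ := hS
  set C : Set V := {y | y ∈ S ∧ Reach G S x y} with hCdef
  have hCsub : C ⊆ S := fun y hy => hy.1
  have hxC : x ∈ C := ⟨hxS, Relation.ReflTransGen.refl⟩
  have hclose : ∀ {u w : V}, u ∈ C → w ∈ S → G.Adj u w → w ∈ C := by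
    intro u w hu hw hadj
    exact ⟨hw, hu.2.tail ⟨hu.1, hw, hadj⟩⟩
  have hmax : ∀ C' ⊆ S, Conn G C' → ∀ z ∈ C', z ∈ C → C' ⊆ C := by
    intro C' hC'S hconn' z hz hzC w hw
    have h1 : Reach G S z w := reach_mono hC'S (hconn' z hz w hw)
    exact ⟨reach_mem_right h1 (hC'S hz), hzC.2.trans h1⟩
  have hCconn : Conn G C := by
    intro u hu w hw
    have h1 : Reach G C x u := reach_upgrade hu.2
    have h2 : Reach G C x w := reach_upgrade hw.2
    exact (reach_symm h1).trans h2
  obtain ⟨hpairC, hcardC⟩ := cfg.att C hCsub hCconn ⟨x, hxC⟩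
  -- choose attachment vertices
  have hbex : ∀ p : Set V, ∃ y : {z : V // z ∈ C}, p ∈ cfg.P → AdjS G p C →
      ∃ a ∈ p, G.Adj a ↑y := by
    intro p
    by_cases hp : p ∈ cfg.P ∧ AdjS G p C
    · obtain ⟨a, ha, b, hb, hab⟩ := hp.2
      exact ⟨⟨b, hb⟩, fun _ _ => ⟨a, ha, hab⟩⟩
    · exact ⟨⟨x, hxC⟩, fun h1 h2 => absurd ⟨h1, h2⟩ hp⟩
  choose bC hbC using hbex
  have hGCconn : (G.induce C).Connected := conn_induce_connected ⟨x, hxC⟩ hCconn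
  let r : ↑C := ⟨x, hxC⟩
  obtain ⟨step1, hstep⟩ := exists_step hGCconn r
  -- the new part
  let P0 : Set ↑C := {v | v = r ∨ ∃ p, (p ∈ cfg.P ∧ AdjS G p C) ∧
    ∃ i, i ≤ (G.induce C).dist r (bC p) ∧ v = step1^[i] (bC p)}
  let Pnew : Set V := Subtype.val '' P0
  have hmemP0 : ∀ {v : V}, v ∈ Pnew → ∃ hv : v ∈ C, (⟨v, hv⟩ : ↑C) ∈ P0 := by
    rintro v ⟨u, hu, rfl⟩
    exact ⟨u.2, hu⟩
  have hPnewC : Pnew ⊆ C := by rintro v ⟨u, hu, rfl⟩; exact u.2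
  have hxPnew : x ∈ Pnew := ⟨r, Or.inl rfl, rfl⟩
  have hPnewS : Pnew ⊆ S := fun v hv => hCsub (hPnewC hv)
  have hbCPnew : ∀ p, p ∈ cfg.P → AdjS G p C → ↑(bC p) ∈ Pnew :=
    fun p h1 h2 => ⟨bC p, Or.inr ⟨p, ⟨h1, h2⟩, 0, Nat.zero_le _, rfl⟩, rfl⟩
  -- reach chain to x
  have hchainkey : ∀ p, p ∈ cfg.P → AdjS G p C → ∀ j : ℕ,
      j ≤ (G.induce C).dist r (bC p) →
      Reach G Pnew ↑(step1^[(G.induce C).dist r (bC p) - j] (bC p)) x := by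
    intro p hp1 hp2 j
    induction j with
    | zero =>
      intro _
      rw [Nat.sub_zero, step_iter_top hGCconn r step1 hstep]
      exact Relation.ReflTransGen.refl
    | succ j ih =>
      intro hj
      have h1 : (G.induce C).dist r (bC p) - (j+1) + 1 = (G.induce C).dist r (bC p) - j := by
        omega
      have hadj : (G.induce C).Adj (step1^[(G.induce C).dist r (bC p) - j] (bC p))
          (step1^[(G.induce C).dist r (bC p) - (j+1)] (bC p)) := by
        rw [← h1]
        exact step_iter_adj r step1 hstep (bC p) ((G.induce C).dist r (bC p) - (j+1)) (by omega)
      refine Relation.ReflTransGen.head ⟨?_, ?_, ?_⟩ (ih (by omega))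
      · exact ⟨_, Or.inr ⟨p, ⟨hp1, hp2⟩, (G.induce C).dist r (bC p) - (j+1), by omega, rfl⟩, rfl⟩
      · exact ⟨_, Or.inr ⟨p, ⟨hp1, hp2⟩, (G.induce C).dist r (bC p) - j, by omega, rfl⟩, rfl⟩
      · exact hadj.symm
  have hP0reach : ∀ v ∈ P0, Reach G Pnew ↑v x := by
    rintro v (rfl | ⟨p, ⟨hp1, hp2⟩, i, hi, rfl⟩)
    · exact Relation.ReflTransGen.refl
    · have h := hchainkey p hp1 hp2 ((G.induce C).dist r (bC p) - i) (by omega)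
      rwa [Nat.sub_sub_self hi] at h
  have hPnewConn : Conn G Pnew := by
    rintro u hu w hw
    obtain ⟨u0, hu0, rfl⟩ := hu
    obtain ⟨w0, hw0, rfl⟩ := hw
    exact (hP0reach u0 hu0).trans (reach_symm (hP0reach w0 hw0))
  -- choose a fresh part-color
  have hcolex : ∀ p : Set V, ∃ c : Fin (t-1), p ∈ cfg.P → ∀ y ∈ p, (cfg.f y).1 = c := by
    intro p
    by_cases hp : p ∈ cfg.P
    · obtain ⟨y0, hy0⟩ := cfg.nonemp p hp
      exact ⟨(cfg.f y0).1, fun _ y hy => cfg.const p hp y hy y0 hy0⟩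
    · exact ⟨⟨0, by omega⟩, fun h => absurd h hp⟩
  choose colorOf hcolorOf using hcolex
  have hused : ∃ a : Fin (t-1), ∀ p, p ∈ cfg.P → AdjS G p C → ∀ y ∈ p, (cfg.f y).1 ≠ a := by
    by_contra hcon
    push_neg at hcon
    have hsub2 : (Set.univ : Set (Fin (t-1))) ⊆ colorOf '' {p | p ∈ cfg.P ∧ AdjS G p C} := by
      intro c _
      obtain ⟨p, hp1, hp2, y, hy, hyc⟩ := hcon c
      refine ⟨p, ⟨hp1, hp2⟩, ?_⟩
      rw [← hcolorOf p hp1 y hy]; exact hyc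
    have h1 : (Set.univ : Set (Fin (t-1))).ncard = t - 1 := by
      rw [Set.ncard_univ, Nat.card_eq_fintype_card, Fintype.card_fin]
    have h2 := Set.ncard_le_ncard hsub2 (Set.toFinite _)
    have h3 := Set.ncard_image_le (s := {p | p ∈ cfg.P ∧ AdjS G p C}) (f := colorOf)
      (Set.toFinite _)
    have h4 : ({p | p ∈ cfg.P ∧ AdjS G p C} : Set (Set V)).ncard ≤ t - 2 := hcardC
    omega
  obtain ⟨a, ha⟩ := hused
  -- the new coloring
  let inner : V → Fin 2 := fun v =>
    if h : v ∈ C then ⟨(G.induce C).dist r ⟨v, h⟩ % 2, by omega⟩ else 0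
  let f' : V → Fin (t-1) × Fin 2 := fun v => if v ∈ Pnew then (a, inner v) else cfg.f v
  have hf'in : ∀ v ∈ Pnew, f' v = (a, inner v) := fun v hv => if_pos hv
  have hf'out : ∀ v, v ∉ Pnew → f' v = cfg.f v := fun v hv => if_neg hv
  have hPoldSc : ∀ p ∈ cfg.P, p ⊆ Sᶜ := by
    intro p hp
    rw [← cfg.cover]
    exact Set.subset_sUnion_of_mem hp
  have hf'old : ∀ p ∈ cfg.P, ∀ v ∈ p, f' v = cfg.f v := by
    intro p hp v hv
    apply hf'out
    intro hvP
    exact (hPoldSc p hp hv) (hPnewS hvP)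
  have hPnew_notin : Pnew ∉ cfg.P := by
    intro hmem
    exact (hPoldSc Pnew hmem hxPnew) hxS
  have hdisjPnew : ∀ q ∈ cfg.P, Disjoint Pnew q :=
    fun q hq => Set.disjoint_left.mpr fun v hv hq' => (hPoldSc q hq hq') (hPnewS hv)
  refine ⟨S \ Pnew, (Set.ssubset_iff_of_subset Set.diff_subset).mpr
    ⟨x, hxS, fun h => h.2 hxPnew⟩, ⟨?_⟩⟩
  refine
    { f := f'
      P := insert Pnew cfg.P
      hfin := cfg.hfin.insert Pnew
      cover := ?_
      nonemp := ?_
      disj := ?_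
      conn := ?_
      const := ?_
      proper := ?_
      small := ?_
      att := ?_ }
  · rw [Set.sUnion_insert, cfg.cover]
    ext v
    simp only [Set.mem_union, Set.mem_compl_iff, Set.mem_diff]
    tauto
  · rintro p (rfl | hp)
    · exact ⟨x, hxPnew⟩
    · exact cfg.nonemp p hp
  · rintro p (rfl | hp) q (rfl | hq) hpq
    · exact absurd rfl hpq
    · exact hdisjPnew q hq
    · exact (hdisjPnew p hp).symm
    · exact cfg.disj p hp q hq hpq
  · rintro p (rfl | hp)
    · exact hPnewConn
    · exact cfg.conn p hp
  · rintro p (rfl | hp) y hy z hz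
    · rw [hf'in y hy, hf'in z hz]
    · rw [hf'old p hp y hy, hf'old p hp z hz]
      exact cfg.const p hp y hy z hz
  · rintro p (rfl | hp) q (rfl | hq) hpq hadjpq y hy z hz
    · exact absurd rfl hpq
    · -- p = Pnew, q old
      have hqC : AdjS G q C := by
        obtain ⟨u, hu, w, hw, hadj⟩ := hadjpq
        exact ⟨w, hw, u, hPnewC hu, hadj.symm⟩
      rw [hf'in y hy, hf'old q hq z hz]
      exact (ha q hq hqC z hz).symm
    · -- p old, q = Pnew
      have hpC : AdjS G p C := by
        obtain ⟨u, hu, w, hw, hadj⟩ := hadjpq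
        exact ⟨u, hu, w, hPnewC hw, hadj⟩
      rw [hf'old p hp y hy, hf'in z hz]
      exact ha p hp hpC y hy
    · rw [hf'old p hp y hy, hf'old q hq z hz]
      exact cfg.proper p hp q hq hpq hadjpq y hy z hz
  · rintro p (rfl | hp) T hTsub hTconn hTconst
    · -- new part: level argument
      rcases T.eq_empty_or_nonempty with rfl | ⟨v0, hv0⟩
      · simp
      have hTC : T ⊆ C := hTsub.trans hPnewC
      have hdconst : ∀ w ∈ T, ∀ (hw : w ∈ C),
          (G.induce C).dist r ⟨w, hw⟩ = (G.induce C).dist r ⟨v0, hTC hv0⟩ := by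
        have key : ∀ {w}, Reach G T v0 w → ∀ (hw : w ∈ C),
            (G.induce C).dist r ⟨w, hw⟩ = (G.induce C).dist r ⟨v0, hTC hv0⟩ := by
          intro w hreach
          induction hreach with
          | refl => intro hw; rfl
          | @tail u w hu step ih =>
            intro hw
            obtain ⟨huT, hwT, hadj⟩ := step
            have huC : u ∈ C := hTC huT
            have ihu := ih huC
            have hadj' : (G.induce C).Adj ⟨u, huC⟩ ⟨w, hw⟩ := by exact hadj
            have h1 := dist_adj_le (r := r) hGCconn hadj'
            have h2 := dist_adj_le (r := r) hGCconn hadj'.symm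
            have hf1 : f' u = f' w := hTconst u huT w hwT
            have hi1 : inner u = inner w := by
              rw [hf'in u (hTsub huT), hf'in w (hTsub hwT)] at hf1
              exact congrArg Prod.snd hf1
            have hi2 : (G.induce C).dist r ⟨u, huC⟩ % 2 =
                (G.induce C).dist r ⟨w, hw⟩ % 2 := by
              simp only [inner, dif_pos huC, dif_pos hw] at hi1
              exact congrArg Fin.val hi1
            omega
        exact fun w hw hwC => key (hTconn v0 hv0 w hw) hwC
      set j := (G.induce C).dist r ⟨v0, hTC hv0⟩ with hjdef
      have hsubset : T ⊆ Subtype.val '' (insert r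
          ((fun p => step1^[(G.induce C).dist r (bC p) - j] (bC p)) ''
            {p | p ∈ cfg.P ∧ AdjS G p C})) := by
        intro w hw
        have hwC := hTC hw
        have hwP0 : (⟨w, hwC⟩ : ↑C) ∈ P0 := by
          obtain ⟨hv, hv2⟩ := hmemP0 (hTsub hw)
          exact hv2
        rcases hwP0 with heq | ⟨p, hp, i, hi, heq⟩
        · exact ⟨⟨w, hwC⟩, by rw [heq]; exact Set.mem_insert _ _, rfl⟩
        · have hdist : (G.induce C).dist r ⟨w, hwC⟩ = (G.induce C).dist r (bC p) - i := by
            rw [heq]; exact step_iter_dist r step1 hstep (bC p) i hi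
          have hj : (G.induce C).dist r ⟨w, hwC⟩ = j := hdconst w hw hwC
          have hieq : i = (G.induce C).dist r (bC p) - j := by omega
          refine ⟨⟨w, hwC⟩, Set.mem_insert_of_mem _ ⟨p, hp, ?_⟩, rfl⟩
          rw [heq, hieq]
      have h1 := Set.ncard_le_ncard hsubset (Set.toFinite _)
      rw [Set.ncard_image_of_injective _ Subtype.val_injective] at h1
      have h2 := Set.ncard_insert_le r
        ((fun p => step1^[(G.induce C).dist r (bC p) - j] (bC p)) ''
          {p | p ∈ cfg.P ∧ AdjS G p C})
      have h3 := Set.ncard_image_le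
        (s := {p | p ∈ cfg.P ∧ AdjS G p C})
        (f := fun p => step1^[(G.induce C).dist r (bC p) - j] (bC p)) (Set.toFinite _)
      have h4 : ({p | p ∈ cfg.P ∧ AdjS G p C} : Set (Set V)).ncard ≤ t - 2 := hcardC
      omega
    · -- old part
      refine cfg.small p hp T hTsub hTconn ?_
      intro y hy z hz
      rw [← hf'old p hp y (hTsub hy), ← hf'old p hp z (hTsub hz)]
      exact hTconst y hy z hz
  · -- attachments
    intro C' hC'sub hC'conn hC'ne
    obtain ⟨z, hz⟩ := hC'ne
    have hC'S : C' ⊆ S := hC'sub.trans Set.diff_subset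
    by_cases hzC : z ∈ C
    · have hC'C : C' ⊆ C := hmax C' hC'S hC'conn z hz hzC
      have hPadj : ∀ q ∈ cfg.P, AdjS G q C' → AdjS G Pnew q := by
        intro q hq hqC'
        have hqC : AdjS G q C := by
          obtain ⟨u, hu, w, hw, hadj⟩ := hqC'
          exact ⟨u, hu, w, hC'C hw, hadj⟩
        obtain ⟨u, hu, hadj⟩ := hbC q hq hqC
        exact AdjS.symm' ⟨u, hu, ↑(bC q), hbCPnew q hq hqC, hadj⟩
      have hpairAll : ∀ p ∈ insert Pnew cfg.P, AdjS G p C' →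
          ∀ q ∈ insert Pnew cfg.P, AdjS G q C' → p ≠ q → AdjS G p q := by
        rintro p (rfl | hp) hpC' q (rfl | hq) hqC' hpq
        · exact absurd rfl hpq
        · exact hPadj q hq hqC'
        · exact (hPadj p hp hpC').symm'
        · have h1 : AdjS G p C := by
            obtain ⟨u, hu, w, hw, hadj⟩ := hpC'
            exact ⟨u, hu, w, hC'C hw, hadj⟩
          have h2 : AdjS G q C := by
            obtain ⟨u, hu, w, hw, hadj⟩ := hqC'
            exact ⟨u, hu, w, hC'C hw, hadj⟩
          exact hpairC p hp h1 q hq h2 hpq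
      refine ⟨hpairAll, ?_⟩
      by_contra hbig
      push_neg at hbig
      have hge : t - 1 ≤ ({p ∈ insert Pnew cfg.P | AdjS G p C'} : Set (Set V)).ncard := by
        omega
      obtain ⟨Q, hQsub, hQcard⟩ := Set.exists_subset_card_eq hge
      apply hG
      have hQprops : ∀ p ∈ Q, (p = Pnew ∨ p ∈ cfg.P) ∧ AdjS G p C' := by
        intro p hp
        have h := hQsub hp
        exact ⟨Set.mem_insert_iff.mp h.1, h.2⟩
      refine clique_minor_of_parts (by omega) (Set.toFinite Q) hQcard hC'conn ⟨z, hz⟩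
        ?_ ?_ ?_ ?_ ?_ ?_
      · intro p hp
        rcases (hQprops p hp).1 with rfl | hpP
        · exact hPnewConn
        · exact cfg.conn p hpP
      · intro p hp
        rcases (hQprops p hp).1 with rfl | hpP
        · exact ⟨x, hxPnew⟩
        · exact cfg.nonemp p hpP
      · intro p hp q hq hpq
        rcases (hQprops p hp).1 with rfl | hpP <;> rcases (hQprops q hq).1 with rfl | hqP
        · exact absurd rfl hpq
        · exact hdisjPnew q hqP
        · exact (hdisjPnew p hpP).symm
        · exact cfg.disj p hpP q hqP hpq
      · intro p hp
        rcases (hQprops p hp).1 with rfl | hpP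
        · exact Set.disjoint_left.mpr fun v hv hv' => (hC'sub hv').2 hv
        · exact Set.disjoint_left.mpr fun v hv hv' => (hPoldSc p hpP hv) (hC'S hv')
      · intro p hp q hq hpq
        have h1 := hQsub hp
        have h2 := hQsub hq
        exact hpairAll p h1.1 h1.2 q h2.1 h2.2 hpq
      · exact fun p hp => (hQprops p hp).2
    · have hC'C : ∀ w ∈ C', w ∉ C := by
        intro w hw hwC
        exact hzC (hmax C' hC'S hC'conn w hw hwC hz)
      have hnoPnew : ¬ AdjS G Pnew C' := by
        rintro ⟨u, hu, w, hw, hadj⟩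
        exact hC'C w hw (hclose (hPnewC hu) (hC'S hw) hadj)
      have hsame : ({p ∈ insert Pnew cfg.P | AdjS G p C'} : Set (Set V)) =
          {p ∈ cfg.P | AdjS G p C'} := by
        ext p
        simp only [Set.mem_setOf_eq, Set.mem_insert_iff]
        constructor
        · rintro ⟨rfl | hpP, hadj⟩
          · exact absurd hadj hnoPnew
          · exact ⟨hpP, hadj⟩
        · rintro ⟨hpP, hadj⟩
          exact ⟨Or.inr hpP, hadj⟩
      obtain ⟨hpair', hcard'⟩ := cfg.att C' hC'S hC'conn ⟨z, hz⟩
      constructor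
      · rintro p (rfl | hp) hpC' q hq hqC' hpq
        · exact absurd hpC' hnoPnew
        · rcases hq with rfl | hqP
          · exact absurd hqC' hnoPnew
          · exact hpair' p hp hpC' q hqP hqC' hpq
      · rw [hsame]; exact hcard'

end Stmt11Aux

namespace Stmt11Aux

open SimpleGraph Set

variable {V : Type} [Fintype V]

lemma drive {G : SimpleGraph V} {t : ℕ} (ht : 2 ≤ t) (hG : ¬ HasCliqueMinor G t) :
    ∀ (n : ℕ) (S : Set V), S.ncard ≤ n → Config G t S → Nonempty (Config G t ∅) := by
  intro n
  induction n with
  | zero =>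
    intro S hle cfg
    have hS : S = ∅ := by
      rw [← Set.ncard_eq_zero (Set.toFinite S)]
      omega
    exact ⟨hS ▸ cfg⟩
  | succ n ih =>
    intro S hle cfg
    rcases S.eq_empty_or_nonempty with rfl | hS
    · exact ⟨cfg⟩
    · obtain ⟨S', hsub, ⟨cfg'⟩⟩ := descend ht hG cfg hS
      refine ih S' ?_ cfg'
      have := Set.ncard_lt_ncard hsub (Set.toFinite S)
      omega

lemma reach_supp {G : SimpleGraph V} {W : Set V} (comp : (G.induce W).ConnectedComponent) :
    ∀ {a b : ↑W} (_ : (G.induce W).Walk a b),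
      (G.induce W).connectedComponentMk a = comp →
      Reach G (Subtype.val '' comp.supp) ↑a ↑b := by
  intro a b w
  induction w with
  | nil => intro _; exact Relation.ReflTransGen.refl
  | @cons u v w h p ih =>
    intro hu
    have hv : (G.induce W).connectedComponentMk v = comp := by
      rw [← hu]
      exact ConnectedComponent.sound h.symm.reachable
    refine Relation.ReflTransGen.head ⟨?_, ?_, by exact h⟩ (ih hv)
    · exact ⟨u, (ConnectedComponent.mem_supp_iff _ _).mpr hu, rfl⟩
    · exact ⟨v, (ConnectedComponent.mem_supp_iff _ _).mpr hv, rfl⟩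

lemma final_bound {G : SimpleGraph V} {t : ℕ} (ht : 2 ≤ t) (cfg : Config G t ∅) :
    ∃ f : V → Fin ((7 * t - 2) / 2),
      ∀ x : V, (((G.induce {y | f y = f x}).connectedComponentMk
        ⟨x, rfl⟩).supp).ncard ≤ t := by
  classical
  have hle : 2 * t - 2 ≤ (7 * t - 2) / 2 := by
    rw [Nat.le_div_iff_mul_le (by norm_num)]
    omega
  have hcard : ∀ p : Fin (t-1) × Fin 2, p.1.val * 2 + p.2.val < (7 * t - 2) / 2 := by
    intro p
    have h1 := p.1.isLt
    have h2 := p.2.isLt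
    omega
  let enc : Fin (t-1) × Fin 2 → Fin ((7*t-2)/2) := fun p =>
    ⟨p.1.val * 2 + p.2.val, hcard p⟩
  have henc : ∀ p q, enc p = enc q → p = q := by
    intro p q h
    have h0 := congrArg Fin.val h
    simp only [enc] at h0
    have h1 := p.2.isLt
    have h2 := q.2.isLt
    have hv1 : p.1.val = q.1.val := by omega
    have hv2 : p.2.val = q.2.val := by omega
    exact Prod.ext (Fin.ext hv1) (Fin.ext hv2)
  refine ⟨fun v => enc (cfg.f v), ?_⟩
  intro x
  have main : ∀ (Wx : Set V) (hxW : x ∈ Wx),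
      Wx = {y | enc (cfg.f y) = enc (cfg.f x)} →
      (((G.induce Wx).connectedComponentMk ⟨x, hxW⟩).supp).ncard ≤ t := by
    intro Wx hxW hWdef
    have hx : x ∈ ⋃₀ cfg.P := by rw [cfg.cover]; simp
    obtain ⟨p, hp, hxp⟩ := hx
    set comp := (G.induce Wx).connectedComponentMk ⟨x, hxW⟩ with hcompdef
    set T : Set V := Subtype.val '' comp.supp with hTdef
    have hfconstT : ∀ z ∈ T, cfg.f z = cfg.f x := by
      rintro z ⟨⟨zv, hzv⟩, hz0, rfl⟩
      clear hz0
      rw [hWdef] at hzv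
      exact henc _ _ hzv
    have hxT : x ∈ T := ⟨⟨x, hxW⟩, (ConnectedComponent.mem_supp_iff _ _).mpr rfl, rfl⟩
    have hTconn : Conn G T := by
      rintro u ⟨u0, hu0, rfl⟩ w ⟨w0, hw0, rfl⟩
      rw [ConnectedComponent.mem_supp_iff] at hu0 hw0
      have hreach : (G.induce Wx).Reachable u0 w0 :=
        ConnectedComponent.exact (hu0.trans hw0.symm)
      obtain ⟨wk⟩ := hreach
      exact reach_supp comp wk hu0
    have hTp : T ⊆ p := by
      intro z hz
      have hr : Reach G T x z := hTconn x hxT z hz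
      clear hz
      induction hr with
      | refl => exact hxp
      | @tail b c hxb step ih =>
        obtain ⟨hbT, hcT, hadj⟩ := step
        have hbp : b ∈ p := ih
        have hc2 : c ∈ ⋃₀ cfg.P := by rw [cfg.cover]; simp
        obtain ⟨q, hq, hcq⟩ := hc2
        by_cases hpq : q = p
        · rwa [hpq] at hcq
        · exfalso
          have hAdj : AdjS G p q := ⟨b, hbp, c, hcq, hadj⟩
          have hne := cfg.proper p hp q hq (Ne.symm hpq) hAdj b hbp c hcq
          have hfb : cfg.f b = cfg.f x := hfconstT b hbT
          have hfc : cfg.f c = cfg.f x := hfconstT c hcT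
          rw [hfb, hfc] at hne
          exact hne rfl
    have hsmall := cfg.small p hp T hTp hTconn
      (fun y hy z hz => by rw [hfconstT y hy, hfconstT z hz])
    have himg : T.ncard = (comp.supp).ncard :=
      Set.ncard_image_of_injective _ Subtype.val_injective
    omega
  exact main {y | enc (cfg.f y) = enc (cfg.f x)} rfl rfl

end Stmt11Aux

/-- Assuming the Norine–Thomas theorem (every sufficiently large
`(t+1)`-connected graph has a `K_t`-minor), every graph with no `K_t`-minor
admits a vertex partition into `⌈(7t−3)/2⌉` parts such that every monochromatic
component has bounded size. -/
theorem stmt11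
    (NT : ∀ t : ℕ, 0 < t → ∃ N : ℕ,
      ∀ (V : Type) (_ : Fintype V) (G : SimpleGraph V),
        KConnected (t + 1) G → N ≤ (Set.univ : Set V).ncard →
          HasCliqueMinor G t) :
    ∀ t : ℕ, 0 < t → ∃ M : ℕ,
      ∀ (V : Type) (_ : Fintype V) (G : SimpleGraph V),
        ¬ HasCliqueMinor G t →
          ∃ f : V → Fin ((7 * t - 2) / 2),
            ∀ x : V,
              (((G.induce {y | f y = f x}).connectedComponentMk
                  ⟨x, rfl⟩).supp).ncard ≤ M := by
  intro t ht
  refine ⟨t, ?_⟩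
  intro V' hV' G hG
  haveI := hV'
  by_cases ht2 : 2 ≤ t
  · have cfg0 : Stmt11Aux.Config G t Set.univ :=
      { f := fun _ => (⟨0, by omega⟩, 0)
        P := ∅
        hfin := Set.finite_empty
        cover := by simp
        nonemp := fun p hp => absurd hp (Set.notMem_empty p)
        disj := fun p hp => absurd hp (Set.notMem_empty p)
        conn := fun p hp => absurd hp (Set.notMem_empty p)
        const := fun p hp => absurd hp (Set.notMem_empty p)
        proper := fun p hp => absurd hp (Set.notMem_empty p)
        small := fun p hp => absurd hp (Set.notMem_empty p)
        att := by
          intro C hC hconn hne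
          constructor
          · exact fun p hp => absurd hp (Set.notMem_empty p)
          · have he : {p ∈ (∅ : Set (Set V')) | Stmt11Aux.AdjS G p C} = ∅ := by
              ext p; simp
            rw [he]
            simp }
    obtain ⟨cfg⟩ := Stmt11Aux.drive ht2 hG (Set.univ : Set V').ncard Set.univ le_rfl cfg0
    exact Stmt11Aux.final_bound ht2 cfg
  · have ht1 : t = 1 := by omega
    subst ht1
    have hVempty : ∀ v : V', False := by
      intro v
      apply hG
      refine ⟨fun _ => {v}, ?_, ?_, ?_⟩
      · intro i
        haveI : Nonempty ↑({v} : Set V') := ⟨⟨v, rfl⟩⟩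
        refine ⟨fun a b => ?_⟩
        have hab : a = b := Subtype.ext (by
          have ha := a.2
          have hb := b.2
          simp only [Set.mem_singleton_iff] at ha hb
          rw [ha, hb])
        rw [hab]
      · intro i j hij; exact absurd (Subsingleton.elim i j) hij
      · intro i j hij; exact absurd (Subsingleton.elim i j) hij
    exact ⟨fun v => (hVempty v).elim, fun x => (hVempty x).elim⟩
end

section
/- For every odd integer k ≥ 5 and every integer n with 4 ≤ n ≤ k − 1, there exists a graph G with a vertex v of degree n such that: every neighbour of v has degree exactly (3/2)(k−1) in G; between every pair of distinct vertices of V(G) − {v} there are k internally disjoint paths; and for every neighbour w of v, the contracted graph G/vw is not k-connected. -/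
open SimpleGraph

open List


abbrev MV (n p : ℕ) : Type := Option (ZMod n × Fin p)

def MG (n p : ℕ) : SimpleGraph (MV n p) where
  Adj x y := x ≠ y ∧ (match x, y with
    | none, none => False
    | none, some (_, b) => (b : ℕ) = 0
    | some (_, a), none => (a : ℕ) = 0
    | some (i, _), some (j, _) => i = j ∨ j = i + 1 ∨ i = j + 1)
  symm := by
    constructor
    rintro (_ | ⟨i, a⟩) (_ | ⟨j, b⟩) ⟨hne, h⟩ <;>
      refine ⟨Ne.symm hne, ?_⟩ <;> dsimp only at h ⊢ <;> tauto
  loopless := by constructor; rintro x ⟨h, -⟩; exact h rfl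

section zmod
variable {n : ℕ} (hn : 4 ≤ n)

theorem zmod_cast_eq_iff {s t : ℕ} (hs : s < n) (ht : t < n) :
    (s : ZMod n) = (t : ZMod n) ↔ s = t := by
  rw [ZMod.natCast_eq_natCast_iff', Nat.mod_eq_of_lt hs, Nat.mod_eq_of_lt ht]

include hn in
theorem zmod_cast_ne_zero {m : ℕ} (h0 : 0 < m) (h4 : m < n) : (m : ZMod n) ≠ 0 := by
  haveI : NeZero n := ⟨by omega⟩
  rw [Ne, ZMod.natCast_eq_zero_iff]
  exact fun h => absurd (Nat.le_of_dvd h0 h) (by omega)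

include hn in
theorem zmod_add_ne {i : ZMod n} {m : ℕ} (h0 : 0 < m) (h4 : m < n) : i + m ≠ i := by
  intro h
  have : (m : ZMod n) = 0 := by
    have := congrArg (fun z => z - i) h
    simpa [add_comm, add_sub_cancel_right] using this
  exact zmod_cast_ne_zero hn h0 h4 this

include hn in
theorem zmod_add_inj {i : ZMod n} {s t : ℕ} (hs : s < n) (ht : t < n)
    (h : i + s = i + t) : s = t := by
  have : (s : ZMod n) = t := by
    have := congrArg (fun z => z - i) h
    simpa [add_comm, add_sub_cancel_right] using this
  exact (zmod_cast_eq_iff hs ht).mp this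

end zmod

variable {V : Type*}

theorem chain_rev (G : SimpleGraph V) (x y : V) (l : List V)
    (h : List.Chain G.Adj x (l ++ [y])) :
    List.Chain G.Adj y (l.reverse ++ [x]) := by
  have hflip : flip G.Adj = G.Adj := by
    ext a b; exact ⟨fun h => h.symm, fun h => h.symm⟩
  have h1 : List.Chain' G.Adj (x :: (l ++ [y])) := h
  have h2 : List.Chain' G.Adj ((x :: (l ++ [y])).reverse) := by
    show List.IsChain _ _; rw [List.isChain_reverse]; exact List.IsChain.imp (fun a b h => h.symm) h1
  have h3 : (x :: (l ++ [y])).reverse = y :: (l.reverse ++ [x]) := by simp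
  rw [h3] at h2
  exact h2

def arcL (n p : ℕ) (c : Fin p) : ℕ → ZMod n → List (MV n p)
  | 0, _ => []
  | m + 1, i => some (i + 1, c) :: arcL n p c m (i + 1)

theorem mem_arcL {n p : ℕ} {c : Fin p} : ∀ {m : ℕ} {i : ZMod n} {z : MV n p},
    z ∈ arcL n p c m i ↔ ∃ t : ℕ, t < m ∧ z = some (i + (t + 1 : ℕ), c)
  | 0, i, z => by simp [arcL]
  | m + 1, i, z => by
    simp only [arcL, List.mem_cons, mem_arcL (m := m)]
    constructor
    · rintro (rfl | ⟨t, ht, rfl⟩)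
      · exact ⟨0, by omega, by push_cast; ring_nf⟩
      · exact ⟨t + 1, by omega, by push_cast; ring_nf⟩
    · rintro ⟨t, ht, rfl⟩
      match t with
      | 0 => exact Or.inl (by push_cast; ring_nf)
      | t + 1 => exact Or.inr ⟨t, by omega, by push_cast; ring_nf⟩

theorem chain_arcL {n p : ℕ} (hn : 4 ≤ n) (a b : Fin p) (c : Fin p) :
    ∀ (m : ℕ) (i : ZMod n), m + 1 < n →
      List.Chain (MG n p).Adj (some (i, a))
        (arcL n p c m i ++ [some (i + (m + 1 : ℕ), b)])
  | 0, i, hm => by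
    refine List.Chain.cons ⟨?_, by dsimp only; right; left; push_cast; ring⟩ List.Chain.nil
    intro h
    have := (Option.some_injective _ h)
    have hi : i = i + ((1 : ℕ) : ZMod n) := by
      have := congrArg Prod.fst this; simpa using this
    exact zmod_add_ne hn (by omega) (by omega) hi.symm
  | m + 1, i, hm => by
    rw [arcL, List.cons_append]
    refine List.Chain.cons ⟨?_, by dsimp only; right; left; ring⟩ ?_
    · intro h
      have hi : i = i + ((1 : ℕ) : ZMod n) := by
        have := congrArg Prod.fst (Option.some_injective _ h); simpa using this
      exact zmod_add_ne hn (by omega) (by omega) hi.symm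
    · have := chain_arcL hn c b c m (i + 1) (by omega)
      have he : (i + 1) + ((m + 1 : ℕ) : ZMod n) = i + ((m + 1 + 1 : ℕ) : ZMod n) := by
        push_cast; ring
      rwa [he] at this

theorem nodup_arcL {n p : ℕ} (hn : 4 ≤ n) (c : Fin p) :
    ∀ (m : ℕ) (i : ZMod n), m < n → (arcL n p c m i).Nodup
  | 0, i, _ => List.nodup_nil
  | m + 1, i, hm => by
    rw [arcL, List.nodup_cons]
    refine ⟨fun h => ?_, nodup_arcL hn c m (i + 1) (by omega)⟩
    rw [mem_arcL] at h
    obtain ⟨t, ht, he⟩ := h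
    have h1 := congrArg Prod.fst (Option.some_injective _ he)
    have h2 : (i + 1) + ((t + 1 : ℕ) : ZMod n) = i + 1 := by simpa using h1.symm
    exact zmod_add_ne hn (by omega) (by omega) h2

variable {V : Type*}

def ofChain (G : SimpleGraph V) : ∀ (x y : V) (l : List V),
    List.Chain G.Adj x (l ++ [y]) → G.Walk x y
  | x, y, [], h => Walk.cons (by simpa using (List.chain_cons.mp h).1) Walk.nil
  | x, y, a :: l, h =>
      Walk.cons (List.chain_cons.mp h).1 (ofChain G a y l (List.chain_cons.mp h).2)

theorem ofChain_support (G : SimpleGraph V) : ∀ (x y : V) (l : List V)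
    (h : List.Chain G.Adj x (l ++ [y])), (ofChain G x y l h).support = x :: (l ++ [y])
  | x, y, [], h => by simp [ofChain]
  | x, y, a :: l, h => by
      simp [ofChain]
      exact ofChain_support G a y l _

theorem ofChain_isPath (G : SimpleGraph V) (x y : V) (l : List V)
    (h : List.Chain G.Adj x (l ++ [y])) (hnd : (x :: (l ++ [y])).Nodup) :
    (ofChain G x y l h).IsPath := by
  rw [Walk.isPath_def, ofChain_support]; exact hnd

/-- glue lemma: given an indexing type of card k and internal lists, get the path family. -/
theorem exists_paths_of_lists {k : ℕ} (G : SimpleGraph V) (x y : V)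
    {ι : Type} [Fintype ι] (hcard : Fintype.card ι = k)
    (L : ι → List V)
    (hchain : ∀ i, List.Chain G.Adj x (L i ++ [y]))
    (hnd : ∀ i, (x :: (L i ++ [y])).Nodup)
    (hdisj : ∀ i j, i ≠ j → ∀ z, z ∈ L i → z ∈ L j → False) :
    ∃ P : Fin k → G.Walk x y, (∀ i, (P i).IsPath) ∧
      ∀ i j, i ≠ j → ∀ z, z ∈ (P i).support → z ∈ (P j).support →
        z = x ∨ z = y := by
  have e : Fin k ≃ ι := (Fintype.equivFinOfCardEq hcard).symm
  refine ⟨fun i => ofChain G x y (L (e i)) (hchain (e i)),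
    fun i => ofChain_isPath _ _ _ _ _ (hnd (e i)), ?_⟩
  intro i j hij z hzi hzj
  rw [ofChain_support] at hzi hzj
  simp only [List.mem_cons, List.mem_append, List.mem_singleton] at hzi hzj
  rcases hzi with rfl | hzi | rfl | h
  · exact Or.inl rfl
  · rcases hzj with rfl | hzj | rfl | h
    · exact Or.inl rfl
    · exact absurd (hdisj (e i) (e j) (fun h => hij (e.injective h)) z hzi hzj) not_false
    · exact Or.inr rfl
    · exact absurd h (List.not_mem_nil (a := z))
  · exact Or.inr rfl
  · exact absurd h (List.not_mem_nil (a := z))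
theorem paths_part {n p k : ℕ} (hn : 4 ≤ n) (hp : 2 ≤ p) (hk : k = 2 * p + 1)
    (x y : MV n p) (hx : x ≠ none) (hy : y ≠ none) (hxy : x ≠ y) :
    ∃ P : Fin k → (MG n p).Walk x y, (∀ i, (P i).IsPath) ∧
      ∀ i j, i ≠ j → ∀ z, z ∈ (P i).support → z ∈ (P j).support →
        z = x ∨ z = y := by
  haveI : NeZero n := ⟨by omega⟩
  haveI : NeZero p := ⟨by omega⟩
  have sne : ∀ (i' j' : ZMod n) (c c' : Fin p),
      (some (i', c) : MV n p) = some (j', c') → i' = j' ∧ c = c' := by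
    intro _ _ _ _ h
    simpa [Prod.ext_iff] using h
  have vz : ∀ c : Fin p, c = 0 → (c : ℕ) = 0 := fun c h => by simp [h]
  by_cases hadj : (MG n p).Adj x y
  · exact exists_paths_of_lists (MG n p) x y (Fintype.card_fin k) (fun _ => [])
      (fun _ => List.Chain.cons hadj List.Chain.nil)
      (fun _ => by simp [hxy])
      (fun _ _ _ z hz => absurd hz (List.not_mem_nil (a := z)))
  · obtain ⟨⟨i, a⟩, rfl⟩ := Option.ne_none_iff_exists'.mp hx
    obtain ⟨⟨j, b⟩, rfl⟩ := Option.ne_none_iff_exists'.mp hy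
    have hnd : ¬ (i = j ∨ j = i + 1 ∨ i = j + 1) := fun h => hadj ⟨hxy, h⟩
    have hij : i ≠ j := fun h => hnd (Or.inl h)
    have hji1 : j ≠ i + 1 := fun h => hnd (Or.inr (Or.inl h))
    have hij1 : i ≠ j + 1 := fun h => hnd (Or.inr (Or.inr h))
    set d : ℕ := (j - i).val with hddef
    have hdval : ((d : ℕ) : ZMod n) = j - i := ZMod.natCast_rightInverse _
    have hdn : d < n := ZMod.val_lt _
    have hji : i + ((d : ℕ) : ZMod n) = j := by
      rw [hdval, add_comm, sub_add_cancel]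
    have hd0 : d ≠ 0 := by
      intro h
      rw [h] at hdval
      push_cast at hdval
      exact hij (by linear_combination hdval)
    have hd1 : d ≠ 1 := by
      intro h
      rw [h] at hdval
      push_cast at hdval
      exact hji1 (by linear_combination -hdval)
    have hdn1 : d ≠ n - 1 := by
      intro h
      rw [h] at hdval
      rw [Nat.cast_sub (by omega : 1 ≤ n), ZMod.natCast_self] at hdval
      exact hij1 (by linear_combination hdval)
    set Lf : Fin p → List (MV n p) := fun c => arcL n p c (d - 1) i with hLf
    set Lb : Fin p → List (MV n p) := fun c => (arcL n p c (n - d - 1) j).reverse with hLb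
    set Lv : List (MV n p) :=
      (if (a : ℕ) = 0 then [] else [some (i, (0 : Fin p))]) ++
        none :: (if (b : ℕ) = 0 then [] else [some (j, (0 : Fin p))]) with hLv
    have memF : ∀ (c : Fin p) z, z ∈ Lf c →
        ∃ t : ℕ, 1 ≤ t ∧ t ≤ d - 1 ∧ z = some (i + (t : ZMod n), c) := by
      intro c z hz
      rw [hLf, mem_arcL] at hz
      obtain ⟨t, ht, rfl⟩ := hz
      exact ⟨t + 1, by omega, by omega, rfl⟩
    have memB : ∀ (c : Fin p) z, z ∈ Lb c →
        ∃ t : ℕ, d + 1 ≤ t ∧ t ≤ n - 1 ∧ z = some (i + (t : ZMod n), c) := by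
      intro c z hz
      rw [hLb, List.mem_reverse, mem_arcL] at hz
      obtain ⟨t, ht, rfl⟩ := hz
      refine ⟨d + (t + 1), by omega, by omega, ?_⟩
      rw [← hji]
      push_cast
      ring_nf
    have memV : ∀ z, z ∈ Lv →
        z = none ∨ ((a : ℕ) ≠ 0 ∧ z = some (i, (0 : Fin p))) ∨
          ((b : ℕ) ≠ 0 ∧ z = some (j, (0 : Fin p))) := by
      intro z hz
      rw [hLv] at hz
      by_cases ha : (a : ℕ) = 0 <;> by_cases hb : (b : ℕ) = 0 <;>
        simp [ha, hb] at hz <;> tauto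
    have chF : ∀ c : Fin p,
        List.Chain (MG n p).Adj (some (i, a)) (Lf c ++ [some (j, b)]) := by
      intro c
      have h1 := chain_arcL hn a b c (d - 1) i (by omega)
      have he : (d - 1 + 1 : ℕ) = d := by omega
      rw [he, hji] at h1
      exact h1
    have chB : ∀ c : Fin p,
        List.Chain (MG n p).Adj (some (i, a)) (Lb c ++ [some (j, b)]) := by
      intro c
      have h1 := chain_arcL hn b a c (n - d - 1) j (by omega)
      have he : (n - d - 1 + 1 : ℕ) = n - d := by omega
      rw [he] at h1
      have he2 : j + ((n - d : ℕ) : ZMod n) = i := by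
        rw [Nat.cast_sub (by omega : d ≤ n), ZMod.natCast_self, ← hji]
        ring
      rw [he2] at h1
      exact chain_rev _ _ _ _ h1
    have chV : List.Chain (MG n p).Adj (some (i, a)) (Lv ++ [some (j, b)]) := by
      rw [hLv]
      by_cases ha : (a : ℕ) = 0 <;> by_cases hb : (b : ℕ) = 0
      · rw [if_pos ha, if_pos hb]
        exact List.Chain.cons ⟨by simp, ha⟩ (List.Chain.cons ⟨by simp, hb⟩ List.Chain.nil)
      · rw [if_pos ha, if_neg hb]
        refine List.Chain.cons ⟨by simp, ha⟩ (List.Chain.cons ⟨by simp, by simp⟩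
          (List.Chain.cons ⟨?_, Or.inl rfl⟩ List.Chain.nil))
        intro h
        exact hb (vz b ((sne _ _ _ _ h).2).symm)
      · rw [if_neg ha, if_pos hb]
        refine List.Chain.cons ⟨?_, Or.inl rfl⟩ (List.Chain.cons ⟨by simp, by simp⟩
          (List.Chain.cons ⟨by simp, hb⟩ List.Chain.nil))
        intro h
        exact ha (vz a ((sne _ _ _ _ h).2))
      · rw [if_neg ha, if_neg hb]
        refine List.Chain.cons ⟨?_, Or.inl rfl⟩ (List.Chain.cons ⟨by simp, by simp⟩
          (List.Chain.cons ⟨by simp, by simp⟩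
            (List.Chain.cons ⟨?_, Or.inl rfl⟩ List.Chain.nil)))
        · intro h
          exact ha (vz a ((sne _ _ _ _ h).2))
        · intro h
          exact hb (vz b ((sne _ _ _ _ h).2).symm)
    have ndF : ∀ c : Fin p, (some (i, a) :: (Lf c ++ [some (j, b)])).Nodup := by
      intro c
      rw [List.nodup_cons, List.nodup_append]
      refine ⟨?_, nodup_arcL hn c _ _ (by omega), by simp, ?_⟩
      · intro hmem
        rw [List.mem_append, List.mem_singleton] at hmem
        rcases hmem with hmem | hmem
        · obtain ⟨t, ht1, ht2, heq⟩ := memF c _ hmem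
          exact zmod_add_ne hn (by omega) (by omega) ((sne _ _ _ _ heq).1).symm
        · exact hxy hmem
      · intro z hz w hw hz2
        rw [List.mem_singleton] at hw
        subst hw; subst hz2
        obtain ⟨t, ht1, ht2, heq⟩ := memF c _ hz
        have := (sne _ _ _ _ heq).1
        rw [← hji] at this
        have := zmod_add_inj hn (by omega) (by omega) this
        omega
    have ndB : ∀ c : Fin p, (some (i, a) :: (Lb c ++ [some (j, b)])).Nodup := by
      intro c
      rw [List.nodup_cons, List.nodup_append]
      refine ⟨?_, List.nodup_reverse.mpr (nodup_arcL hn c _ _ (by omega)), by simp, ?_⟩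
      · intro hmem
        rw [List.mem_append, List.mem_singleton] at hmem
        rcases hmem with hmem | hmem
        · obtain ⟨t, ht1, ht2, heq⟩ := memB c _ hmem
          exact zmod_add_ne hn (by omega) (by omega) ((sne _ _ _ _ heq).1).symm
        · exact hxy hmem
      · intro z hz w hw hz2
        rw [List.mem_singleton] at hw
        subst hw; subst hz2
        obtain ⟨t, ht1, ht2, heq⟩ := memB c _ hz
        have := (sne _ _ _ _ heq).1
        rw [← hji] at this
        have := zmod_add_inj hn (by omega) (by omega) this
        omega
    have ndV : (some (i, a) :: (Lv ++ [some (j, b)])).Nodup := by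
      have ha' : ∀ h : (a : ℕ) ≠ 0, (some (i, a) : MV n p) ≠ some (i, (0 : Fin p)) := by
        intro h heq
        exact h (vz a ((sne _ _ _ _ heq).2))
      have hb' : ∀ h : (b : ℕ) ≠ 0, (some (j, b) : MV n p) ≠ some (j, (0 : Fin p)) := by
        intro h heq
        exact h (vz b ((sne _ _ _ _ heq).2))
      have hxj : (some (i, a) : MV n p) ≠ some (j, (0 : Fin p)) := by
        intro heq; exact hij (sne _ _ _ _ heq).1
      have hyi : (some (j, b) : MV n p) ≠ some (i, (0 : Fin p)) := by
        intro heq; exact hij ((sne _ _ _ _ heq).1).symm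
      have hji' : (some (i, (0:Fin p)) : MV n p) ≠ some (j, (0 : Fin p)) := by
        intro heq; exact hij (sne _ _ _ _ heq).1
      rw [hLv]
      by_cases ha : (a : ℕ) = 0 <;> by_cases hb : (b : ℕ) = 0 <;>
        simp [ha, hb, hxy, hxj, hyi, hji', ha', hb', Ne.symm]
    -- pairwise disjointness helpers
    have dFF : ∀ c c' : Fin p, c ≠ c' → ∀ z, z ∈ Lf c → z ∈ Lf c' → False := by
      intro c c' hcc z h1 h2
      obtain ⟨t, _, _, rfl⟩ := memF c _ h1
      obtain ⟨t', _, _, heq⟩ := memF c' _ h2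
      exact hcc (sne _ _ _ _ heq).2
    have dBB : ∀ c c' : Fin p, c ≠ c' → ∀ z, z ∈ Lb c → z ∈ Lb c' → False := by
      intro c c' hcc z h1 h2
      obtain ⟨t, _, _, rfl⟩ := memB c _ h1
      obtain ⟨t', _, _, heq⟩ := memB c' _ h2
      exact hcc (sne _ _ _ _ heq).2
    have dFB : ∀ c c' : Fin p, ∀ z, z ∈ Lf c → z ∈ Lb c' → False := by
      intro c c' z h1 h2
      obtain ⟨t, ht1, ht2, rfl⟩ := memF c _ h1
      obtain ⟨t', ht1', ht2', heq⟩ := memB c' _ h2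
      have := zmod_add_inj hn (by omega) (by omega) (sne _ _ _ _ heq).1
      omega
    have dVF : ∀ c : Fin p, ∀ z, z ∈ Lv → z ∈ Lf c → False := by
      intro c z h1 h2
      obtain ⟨t, ht1, ht2, rfl⟩ := memF c _ h2
      rcases memV _ h1 with h | ⟨-, h⟩ | ⟨-, h⟩
      · exact Option.some_ne_none _ h
      · exact zmod_add_ne hn (by omega) (by omega) (sne _ _ _ _ h).1
      · have := (sne _ _ _ _ h).1
        rw [← hji] at this
        have := zmod_add_inj hn (by omega) (by omega) this
        omega
    have dVB : ∀ c : Fin p, ∀ z, z ∈ Lv → z ∈ Lb c → False := by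
      intro c z h1 h2
      obtain ⟨t, ht1, ht2, rfl⟩ := memB c _ h2
      rcases memV _ h1 with h | ⟨-, h⟩ | ⟨-, h⟩
      · exact Option.some_ne_none _ h
      · exact zmod_add_ne hn (by omega) (by omega) (sne _ _ _ _ h).1
      · have := (sne _ _ _ _ h).1
        rw [← hji] at this
        have := zmod_add_inj hn (by omega) (by omega) this
        omega
    refine exists_paths_of_lists (MG n p) _ _
      (show Fintype.card (Option (Fin p ⊕ Fin p)) = k by simp [hk]; omega)
      (fun o => match o with
        | none => Lv
        | some (Sum.inl c) => Lf c
        | some (Sum.inr c) => Lb c) ?_ ?_ ?_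
    · rintro (_ | (c | c))
      · exact chV
      · exact chF c
      · exact chB c
    · rintro (_ | (c | c))
      · exact ndV
      · exact ndF c
      · exact ndB c
    · rintro (_ | (c | c)) (_ | (c' | c')) ho z hz hz'
      · exact absurd rfl ho
      · exact dVF c' z hz hz'
      · exact dVB c' z hz hz'
      · exact dVF c z hz' hz
      · exact dFF c c' (by rintro rfl; exact ho rfl) z hz hz'
      · exact dFB c c' z hz hz'
      · exact dVB c z hz' hz
      · exact dFB c' c z hz' hz
      · exact dBB c c' (by rintro rfl; exact ho rfl) z hz hz'
theorem nbrV {n p : ℕ} (hn : 4 ≤ n) (hp : 2 ≤ p) :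
    ((MG n p).neighborSet none).ncard = n := by
  haveI : NeZero n := ⟨by omega⟩
  haveI : NeZero p := ⟨by omega⟩
  have hset : (MG n p).neighborSet none =
      Set.range (fun i : ZMod n => (some (i, (0 : Fin p)) : MV n p)) := by
    ext u
    simp only [mem_neighborSet, Set.mem_range]
    cases u with
    | none => exact ⟨fun h => absurd rfl h.1, by rintro ⟨_, h⟩; cases h⟩
    | some z =>
      obtain ⟨j, b⟩ := z
      constructor
      · rintro ⟨-, hb⟩
        exact ⟨j, by rw [show (0 : Fin p) = b from Fin.ext (by simpa using hb.symm)]⟩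
      · rintro ⟨i', h⟩
        obtain ⟨h1, h2⟩ : i' = j ∧ (0 : Fin p) = b := by simpa [Prod.ext_iff] using h
        exact ⟨by simp, by simp [← h2]⟩
  rw [hset, ← Set.image_univ, Set.ncard_image_of_injective _ ?_, Set.ncard_univ,
    Nat.card_eq_fintype_card, ZMod.card]
  intro i i' h
  simpa [Prod.ext_iff] using h

def gW (n p : ℕ) [NeZero p] (i : ZMod n) :
    Option ({c : Fin p // c ≠ 0} ⊕ (Fin p ⊕ Fin p)) → MV n p
  | none => none
  | some (Sum.inl c) => some (i, c.1)
  | some (Sum.inr (Sum.inl c)) => some (i + 1, c)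
  | some (Sum.inr (Sum.inr c)) => some (i - 1, c)

theorem nbrW {n p : ℕ} [NeZero p] (hn : 4 ≤ n) (hp : 2 ≤ p) (i : ZMod n) :
    ((MG n p).neighborSet (some (i, (0 : Fin p)))).ncard = 3 * p := by
  haveI : NeZero n := ⟨by omega⟩
  have h10 : (1 : ZMod n) ≠ 0 := by
    have := zmod_cast_ne_zero hn (m := 1) (by omega) (by omega); simpa using this
  have h20 : (2 : ZMod n) ≠ 0 := by
    have := zmod_cast_ne_zero hn (m := 2) (by omega) (by omega); simpa using this
  classical
  have hset : (MG n p).neighborSet (some (i, (0 : Fin p))) = Set.range (gW n p i) := by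
    ext u
    simp only [mem_neighborSet, Set.mem_range]
    constructor
    · intro hu
      cases u with
      | none => exact ⟨none, rfl⟩
      | some z =>
        obtain ⟨j, b⟩ := z
        obtain ⟨hne, h1 | h1 | h1⟩ := hu
        · refine ⟨some (Sum.inl ⟨b, fun hb => hne ?_⟩), by simp [gW, h1]⟩
          rw [h1, hb]
        · exact ⟨some (Sum.inr (Sum.inl b)), by simp [gW, h1]⟩
        · refine ⟨some (Sum.inr (Sum.inr b)), ?_⟩
          have : i - 1 = j := by rw [h1]; ring
          simp [gW, this]
    · rintro ⟨(_ | (⟨c, hc⟩ | (c | c))), rfl⟩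
      · exact ⟨by simp [gW], by simp [gW]⟩
      · exact ⟨by simp [gW, hc, Ne.symm hc], Or.inl rfl⟩
      · refine ⟨?_, Or.inr (Or.inl rfl)⟩
        simp only [gW, ne_eq, Option.some.injEq, Prod.mk.injEq, not_and]
        intro h
        exact absurd h (fun h => h10 (by linear_combination -h))
      · refine ⟨?_, Or.inr (Or.inr (by ring))⟩
        simp only [gW, ne_eq, Option.some.injEq, Prod.mk.injEq, not_and]
        intro h
        exact absurd h (fun h => h10 (by linear_combination h))
  have hinj : Function.Injective (gW n p i) := by
    rintro (_ | (⟨c, hc⟩ | (c | c))) (_ | (⟨c', hc'⟩ | (c' | c'))) h <;>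
      first
        | rfl
        | (simp only [gW] at h; simp at h; done)
        | (simp only [gW, Option.some.injEq, Prod.mk.injEq] at h
           first
            | (exfalso; apply h10; linear_combination h.1)
            | (exfalso; apply h10; linear_combination -h.1)
            | (exfalso; apply h20; linear_combination h.1)
            | (exfalso; apply h20; linear_combination -h.1)
            | exact congrArg some (congrArg Sum.inl (Subtype.ext h.2))
            | exact congrArg some (congrArg Sum.inr (congrArg Sum.inl h.2))
            | exact congrArg some (congrArg Sum.inr (congrArg Sum.inr h.2)))
  rw [hset, ← Set.image_univ, Set.ncard_image_of_injective _ hinj, Set.ncard_univ,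
    Nat.card_eq_fintype_card]
  have hc1 : Fintype.card {c : Fin p // c ≠ 0} = p - 1 := by
    rw [Fintype.card_subtype_compl, Fintype.card_subtype_eq, Fintype.card_fin]
  simp [hc1]
  omega
def gZ (n p : ℕ) [NeZero p] (i : ZMod n) (h2 : (2 : ZMod n) ≠ 0) :
    Option ({c : Fin p // c ≠ 0} ⊕ Fin p) → {x : MV n p // x ≠ some (i, (0 : Fin p))}
  | none => ⟨none, by simp⟩
  | some (Sum.inl c) => ⟨some (i, c.1), by simp [c.2]⟩
  | some (Sum.inr c) => ⟨some (i + 2, c), by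
      intro hq
      rw [Option.some_inj, Prod.mk.injEq] at hq
      exact h2 (by linear_combination hq.1)⟩

theorem contract_not_kconn {n p k : ℕ} [NeZero p] (hn : 4 ≤ n) (hp : 2 ≤ p)
    (hk : k = 2 * p + 1) (i : ZMod n) :
    ¬ KConnected k (contract (MG n p) none (some (i, (0 : Fin p)))) := by
  haveI : NeZero n := ⟨by omega⟩
  have h1z : (1 : ZMod n) ≠ 0 := by
    have := zmod_cast_ne_zero hn (m := 1) (by omega) (by omega); simpa using this
  have h2z : (2 : ZMod n) ≠ 0 := by
    have := zmod_cast_ne_zero hn (m := 2) (by omega) (by omega); simpa using this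
  have h3z : (3 : ZMod n) ≠ 0 := by
    have := zmod_cast_ne_zero hn (m := 3) (by omega) (by omega); simpa using this
  classical
  rintro ⟨-, hKC⟩
  set w : MV n p := some (i, (0 : Fin p)) with hw
  set Z : Set {x : MV n p // x ≠ w} := Set.range (gZ n p i h2z) with hZ
  have hinj : Function.Injective (gZ n p i h2z) := by
    rintro (_ | (⟨c, hc⟩ | c)) (_ | (⟨c', hc'⟩ | c')) h <;>
      have hval := congrArg Subtype.val h <;>
      first
        | rfl
        | (simp only [gZ] at hval; simp at hval; done)
        | (simp only [gZ, Option.some.injEq, Prod.mk.injEq] at hval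
           first
            | (exfalso; apply h2z; linear_combination hval.1)
            | (exfalso; apply h2z; linear_combination -hval.1)
            | (exact congrArg some (congrArg Sum.inl (Subtype.ext hval.2)))
            | (exact congrArg some (congrArg Sum.inr hval.2)))
  have hZcard : Z.ncard = 2 * p := by
    rw [hZ, ← Set.image_univ, Set.ncard_image_of_injective _ hinj, Set.ncard_univ,
      Nat.card_eq_fintype_card]
    have hc1 : Fintype.card {c : Fin p // c ≠ 0} = p - 1 := by
      rw [Fintype.card_subtype_compl, Fintype.card_subtype_eq, Fintype.card_fin]
    simp [hc1]
    omega
  have hcon := hKC Z (by rw [hZcard]; omega)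
  -- the two endpoints
  have hu0w : (some (i + 1, (0 : Fin p)) : MV n p) ≠ w := by
    rw [hw]
    intro hq
    rw [Option.some_inj, Prod.mk.injEq] at hq
    exact h1z (by linear_combination hq.1)
  have hu1w : (some (i + 3, (0 : Fin p)) : MV n p) ≠ w := by
    rw [hw]
    intro hq
    rw [Option.some_inj, Prod.mk.injEq] at hq
    exact h3z (by linear_combination hq.1)
  have hu0 : (⟨some (i + 1, (0 : Fin p)), hu0w⟩ : {x : MV n p // x ≠ w}) ∈ Zᶜ := by
    rintro ⟨(_ | (⟨c, hc⟩ | c)), ho⟩ <;> have hval := congrArg Subtype.val ho <;>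
      simp only [gZ] at hval
    · cases hval
    · rw [Option.some_inj, Prod.mk.injEq] at hval
      exact h1z (by linear_combination -hval.1)
    · rw [Option.some_inj, Prod.mk.injEq] at hval
      exact h1z (by linear_combination hval.1)
  have hu1 : (⟨some (i + 3, (0 : Fin p)), hu1w⟩ : {x : MV n p // x ≠ w}) ∈ Zᶜ := by
    rintro ⟨(_ | (⟨c, hc⟩ | c)), ho⟩ <;> have hval := congrArg Subtype.val ho <;>
      simp only [gZ] at hval
    · cases hval
    · rw [Option.some_inj, Prod.mk.injEq] at hval
      exact h3z (by linear_combination -hval.1)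
    · rw [Option.some_inj, Prod.mk.injEq] at hval
      exact h1z (by linear_combination -hval.1)
  -- invariant
  set G' := contract (MG n p) none w with hG'
  set Q : ↥Zᶜ → Prop := fun u => ∃ c : Fin p, u.1.1 = some (i + 1, c) with hQ
  have step : ∀ a b : ↥Zᶜ, (G'.induce Zᶜ).Adj a b → Q a → Q b := by
    rintro a b hab ⟨c, hc⟩
    obtain ⟨hne, hor⟩ := hab
    have hbnone : b.1.1 ≠ none := by
      intro h
      exact b.2 ⟨none, Subtype.ext (by simp [gZ, h])⟩
    have hanone : a.1.1 ≠ none := by rw [hc]; simp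
    rcases hor with hor | ⟨ha, -⟩ | ⟨hb, -⟩
    · obtain ⟨⟨j', b'⟩, hb'⟩ := Option.ne_none_iff_exists'.mp hbnone
      have hor2 : (MG n p).Adj a.1.1 b.1.1 := hor
      rw [hc, hb'] at hor2
      obtain ⟨-, h1 | h1 | h1⟩ := hor2
      · exact ⟨b', by rw [hb', ← h1]⟩
      · exfalso
        refine b.2 ⟨some (Sum.inr b'), Subtype.ext ?_⟩
        show some (i + 2, b') = b.1.1
        rw [hb', h1]
        norm_num
        ring
      · have hji : j' = i := by
          have : j' + 1 = i + 1 := h1.symm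
          exact add_right_cancel this
        by_cases hb0 : b' = (0 : Fin p)
        · exact absurd (by rw [hb', hji, hb0]) b.1.2
        · exact absurd (Subtype.ext (show some (i, b') = b.1.1 by rw [hb', hji]) :
            gZ n p i h2z (some (Sum.inl ⟨b', hb0⟩)) = b.1) (fun h => b.2 ⟨_, h⟩)
    · exact absurd ha hanone
    · exact absurd hb hbnone
  have walkind : ∀ (a b : ↥Zᶜ) (W : (G'.induce Zᶜ).Walk a b), Q a → Q b := by
    intro a b W
    induction W with
    | nil => exact id
    | cons h W ih => exact fun hQa => ih (step _ _ h hQa)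
  obtain ⟨W⟩ := hcon.preconnected ⟨_, hu0⟩ ⟨_, hu1⟩
  obtain ⟨c, hcq⟩ := walkind _ _ W ⟨0, rfl⟩
  rw [Option.some_inj, Prod.mk.injEq] at hcq
  exact h2z (by linear_combination hcq.1)

/-- The degree bound `(3/2)k − 1` in the contractibility theorem is best
possible: for odd `k ≥ 5` and `4 ≤ n ≤ k − 1` there is a graph `G` with a
vertex `v` of degree `n` whose neighbours all have degree exactly
`(3/2)(k−1)`, such that every pair of distinct vertices other than `v` is
joined by `k` internally disjoint paths, yet no contraction `G/vw` of an edge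
at `v` is `k`-connected. -/
theorem stmt12 (k n : ℕ) (hk : Odd k) (hk5 : 5 ≤ k) (hn4 : 4 ≤ n)
    (hnk : n ≤ k - 1) :
    ∃ (V : Type) (_ : Fintype V) (_ : DecidableEq V)
      (G : SimpleGraph V) (v : V),
      (G.neighborSet v).ncard = n ∧
      (∀ w ∈ G.neighborSet v, 2 * (G.neighborSet w).ncard = 3 * (k - 1)) ∧
      (∀ x y : V, x ≠ v → y ≠ v → x ≠ y →
        ∃ P : Fin k → G.Walk x y, (∀ i, (P i).IsPath) ∧
          ∀ i j, i ≠ j → ∀ z, z ∈ (P i).support → z ∈ (P j).support →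
            z = x ∨ z = y) ∧
      (∀ w, ∀ hw : G.Adj v w, ¬ KConnected k (contract G v w)) := by
  obtain ⟨p, hp⟩ : ∃ p, k = 2 * p + 1 := by
    obtain ⟨m, hm⟩ := hk; exact ⟨m, by omega⟩
  have hp2 : 2 ≤ p := by omega
  haveI : NeZero n := ⟨by omega⟩
  haveI : NeZero p := ⟨by omega⟩
  refine ⟨MV n p, inferInstance, inferInstance, MG n p, none, nbrV hn4 hp2, ?_, ?_, ?_⟩
  · intro w hw
    cases w with
    | none => exact absurd rfl hw.1
    | some z =>
      obtain ⟨j, b⟩ := z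
      have hb : b = 0 := Fin.ext (by simpa using (hw.2 : (b : ℕ) = 0))
      subst hb
      rw [nbrW hn4 hp2 j]
      omega
  · intro x y hxv hyv hxy
    exact paths_part hn4 hp2 hp x y hxv hyv hxy
  · intro w hw
    cases w with
    | none => exact absurd rfl hw.1
    | some z =>
      obtain ⟨j, b⟩ := z
      have hb : b = 0 := Fin.ext (by simpa using (hw.2 : (b : ℕ) = 0))
      subst hb
      exact contract_not_kconn hn4 hp2 hp j
end
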